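/- Let f be a homeomorphism of [a, b] fixing a and b with f(x) < x for all x ∈ (a, b), and fix c ∈ (a, b). Then the intervals fⁿ([f(c), c]), n ∈ ℤ, cover (a, b) and have pairwise disjoint interiors; consequently, every self-homeomorphism h of [f(c), c] fixing f(c) and c extends uniquely to a homeomorphism of [a, b] fixing a and b that commutes with f. -/

import Mathlib

namespace Stmt16Aux

open Set Filter Topology

lemma zpow_apply_add (f : Equiv.Perm ℝ) (m n : ℤ) (x : ℝ) :
    (f ^ (m + n)) x = (f ^ m) ((f ^ n) x) := by
  rw [zpow_add]; rfl

lemma apply_zpow_neg (f : Equiv.Perm ℝ) (n : ℤ) (x : ℝ) :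
    (f ^ n) ((f ^ (-n)) x) = x := by
  rw [← zpow_apply_add]
  simp

lemma zpow_neg_apply (f : Equiv.Perm ℝ) (n : ℤ) (x : ℝ) :
    (f ^ (-n)) ((f ^ n) x) = x := by
  rw [← zpow_apply_add]
  simp

section

variable {a b c : ℝ} {f : Equiv.Perm ℝ}

lemma symm_strictMono (hf : StrictMono f) : StrictMono ⇑f.symm := by
  intro u v huv
  rw [← hf.lt_iff_lt]
  simpa using huv

lemma zpow_strictMono (hf : StrictMono f) : ∀ n : ℤ, StrictMono ⇑(f ^ n) := by
  intro n
  induction n using Int.induction_on with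
  | zero => simpa using strictMono_id
  | succ n ih =>
    have : (f ^ ((n : ℤ) + 1)) = f ^ (n : ℤ) * f := zpow_add_one f n
    rw [this]
    exact fun u v huv => ih (hf huv)
  | pred n ih =>
    have : (f ^ (-(n : ℤ) - 1)) = f ^ (-(n : ℤ)) * f⁻¹ := zpow_sub_one f (-n)
    rw [this]
    intro u v huv
    exact ih (symm_strictMono hf huv)

lemma zpow_continuous (hf : Continuous f) (hf' : Continuous f.symm) :
    ∀ n : ℤ, Continuous ⇑(f ^ n) := by
  intro n
  induction n using Int.induction_on with
  | zero => simpa using continuous_id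
  | succ n ih =>
    rw [zpow_add_one f n]
    exact ih.comp hf
  | pred n ih =>
    rw [zpow_sub_one f (-n)]
    exact ih.comp hf'

lemma zpow_fix (hfa : f a = a) : ∀ n : ℤ, (f ^ n) a = a := by
  intro n
  induction n using Int.induction_on with
  | zero => simp
  | succ n ih =>
    rw [zpow_add_one f n]
    show (f ^ (n : ℤ)) (f a) = a
    rw [hfa, ih]
  | pred n ih =>
    rw [zpow_sub_one f (-n)]
    show (f ^ (-n : ℤ)) (f⁻¹ a) = a
    have : f⁻¹ a = a := by
      conv_lhs => rw [← hfa]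
      simp
    rw [this, ih]

lemma maps_Ioo (hf : StrictMono f) (hfa : f a = a) (hfb : f b = b) (n : ℤ)
    {x : ℝ} (hx : x ∈ Ioo a b) : (f ^ n) x ∈ Ioo a b :=
  ⟨by rw [← zpow_fix hfa n]; exact zpow_strictMono hf n hx.1,
   by rw [← zpow_fix hfb n]; exact zpow_strictMono hf n hx.2⟩

lemma maps_Icc (hf : StrictMono f) (hfa : f a = a) (hfb : f b = b) (n : ℤ)
    {x : ℝ} (hx : x ∈ Icc a b) : (f ^ n) x ∈ Icc a b :=
  ⟨by rw [← zpow_fix hfa n]; exact ((zpow_strictMono hf n).le_iff_le).mpr hx.1,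
   by rw [← zpow_fix hfb n]; exact ((zpow_strictMono hf n).le_iff_le).mpr hx.2⟩

lemma orbit_antitone (hf : StrictMono f) (hfa : f a = a) (hfb : f b = b)
    (hcontract : ∀ x ∈ Set.Ioo a b, f x < x)
    {x : ℝ} (hx : x ∈ Ioo a b) : Antitone (fun n : ℤ => (f ^ n) x) := by
  apply antitone_int_of_succ_le
  intro n
  have h1 : (f ^ (n + 1)) x = f ((f ^ n) x) := by
    rw [add_comm, zpow_apply_add, zpow_one]
  rw [h1]
  exact (hcontract _ (maps_Ioo hf hfa hfb n hx)).le

/-- Iterating `f` forward eventually brings any point below `c`. -/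
lemma exists_zpow_le (hf_cont : Continuous f) (hf : StrictMono f)
    (hfa : f a = a) (hfb : f b = b)
    (hcontract : ∀ x ∈ Set.Ioo a b, f x < x)
    (hc : c ∈ Ioo a b) {x : ℝ} (hx : x ∈ Ioo a b) :
    ∃ n : ℕ, (f ^ (n : ℤ)) x ≤ c := by
  by_contra hcon
  push_neg at hcon
  set u : ℕ → ℝ := fun n => (f ^ (n : ℤ)) x with hu
  have hstep : ∀ n : ℕ, u (n + 1) = f (u n) := by
    intro n
    show (f ^ ((n : ℕ) + 1 : ℤ)) x = f ((f ^ (n : ℤ)) x)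
    push_cast
    rw [add_comm, zpow_apply_add, zpow_one]
  have humem : ∀ n, u n ∈ Ioo a b := fun n => maps_Ioo hf hfa hfb _ hx
  have hanti : Antitone u := antitone_nat_of_succ_le (fun n => by
    rw [hstep n]; exact (hcontract _ (humem n)).le)
  have hbdd : BddBelow (Set.range u) := by
    refine ⟨c, ?_⟩
    rintro _ ⟨n, rfl⟩
    exact (hcon n).le
  have htend := tendsto_atTop_ciInf hanti hbdd
  set L := ⨅ n, u n with hL
  have hL1 : c ≤ L := le_ciInf fun n => (hcon n).le
  have hL2 : L ≤ u 0 := ciInf_le hbdd 0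
  have hu0 : u 0 = x := by simp [hu]
  have hfL : Tendsto (fun n => f (u n)) atTop (𝓝 (f L)) :=
    (hf_cont.tendsto L).comp htend
  have heq : (fun n => f (u n)) = fun n => u (n + 1) := funext fun n => (hstep n).symm
  have htend' : Tendsto (fun n => u (n + 1)) atTop (𝓝 L) :=
    htend.comp (tendsto_add_atTop_nat 1)
  have hfix : f L = L := tendsto_nhds_unique (heq ▸ hfL) htend'
  have hLmem : L ∈ Ioo a b :=
    ⟨lt_of_lt_of_le hc.1 hL1, lt_of_le_of_lt (hL2.trans_eq hu0) hx.2⟩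
  exact absurd hfix (ne_of_lt (hcontract L hLmem))

/-- Iterating `f` backward eventually brings any point above `c`. -/
lemma exists_zpow_gt (hf_cont' : Continuous f.symm) (hf : StrictMono f)
    (hfa : f a = a) (hfb : f b = b)
    (hcontract : ∀ x ∈ Set.Ioo a b, f x < x)
    (hc : c ∈ Ioo a b) {x : ℝ} (hx : x ∈ Ioo a b) :
    ∃ n : ℕ, c < (f ^ (-(n : ℤ))) x := by
  by_contra hcon
  push_neg at hcon
  set u : ℕ → ℝ := fun n => (f ^ (-(n : ℤ))) x with hu
  have hstep : ∀ n : ℕ, u (n + 1) = f.symm (u n) := by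
    intro n
    show (f ^ (-((n : ℕ) + 1 : ℤ))) x = f.symm ((f ^ (-(n : ℤ))) x)
    have : (-((n : ℕ) + 1 : ℤ)) = (-1) + (-(n : ℤ)) := by push_cast; ring
    rw [this, zpow_apply_add, zpow_neg_one]
    rfl
  have humem : ∀ n, u n ∈ Ioo a b := fun n => maps_Ioo hf hfa hfb _ hx
  have hsymm_gt : ∀ y ∈ Ioo a b, y < f.symm y := by
    intro y hy
    have hmem : f.symm y ∈ Ioo a b := by
      have := maps_Ioo hf hfa hfb (-1) hy
      rwa [zpow_neg_one, show ⇑(f⁻¹) = ⇑f.symm from rfl] at this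
    have := hcontract _ hmem
    rwa [Equiv.apply_symm_apply] at this
  have hmono : Monotone u := monotone_nat_of_le_succ (fun n => by
    rw [hstep n]; exact (hsymm_gt _ (humem n)).le)
  have hbdd : BddAbove (Set.range u) := by
    refine ⟨c, ?_⟩
    rintro _ ⟨n, rfl⟩
    exact hcon n
  have htend := tendsto_atTop_ciSup hmono hbdd
  set L := ⨆ n, u n with hL
  have hL1 : L ≤ c := ciSup_le fun n => hcon n
  have hL2 : u 0 ≤ L := le_ciSup hbdd 0
  have hu0 : u 0 = x := by simp [hu]; rfl
  have hfL : Tendsto (fun n => f.symm (u n)) atTop (𝓝 (f.symm L)) :=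
    (hf_cont'.tendsto L).comp htend
  have heq : (fun n => f.symm (u n)) = fun n => u (n + 1) := funext fun n => (hstep n).symm
  have htend' : Tendsto (fun n => u (n + 1)) atTop (𝓝 L) :=
    htend.comp (tendsto_add_atTop_nat 1)
  have hfix : f.symm L = L := tendsto_nhds_unique (heq ▸ hfL) htend'
  have hfix' : f L = L := by
    conv_lhs => rw [← hfix]
    exact f.apply_symm_apply L
  have hLmem : L ∈ Ioo a b :=
    ⟨lt_of_lt_of_le hx.1 (hu0 ▸ hL2), lt_of_le_of_lt hL1 hc.2⟩
  exact absurd hfix' (ne_of_lt (hcontract L hLmem))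

/-- Covering: every interior point has a unique translate in the fundamental domain. -/
lemma exists_mem_Ioc (hf_cont : Continuous f) (hf_cont' : Continuous f.symm)
    (hf : StrictMono f) (hfa : f a = a) (hfb : f b = b)
    (hcontract : ∀ x ∈ Set.Ioo a b, f x < x)
    (hc : c ∈ Ioo a b) {x : ℝ} (hx : x ∈ Ioo a b) :
    ∃ n : ℤ, (f ^ n) x ∈ Ioc (f c) c := by
  obtain ⟨n₁, hn₁⟩ := exists_zpow_le hf_cont hf hfa hfb hcontract hc hx
  obtain ⟨n₂, hn₂⟩ := exists_zpow_gt hf_cont' hf hfa hfb hcontract hc hx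
  have hanti := orbit_antitone hf hfa hfb hcontract hx
  obtain ⟨n₀, hn₀, hleast⟩ := Int.exists_least_of_bdd
    (P := fun n : ℤ => (f ^ n) x ≤ c)
    ⟨-(n₂ : ℤ), by
      intro z hz
      by_contra hzlt
      push_neg at hzlt
      have hzle : z ≤ -(n₂ : ℤ) := hzlt.le
      have : (f ^ (-(n₂ : ℤ))) x ≤ (f ^ z) x := hanti hzle
      exact absurd (this.trans hz) (not_le.mpr hn₂)⟩
    ⟨n₁, hn₁⟩
  refine ⟨n₀, ?_, hn₀⟩
  -- show f c < (f ^ n₀) x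
  have hprev : c < (f ^ (n₀ - 1)) x := by
    by_contra hle
    push_neg at hle
    have := hleast _ hle
    omega
  have hkey : (f ^ n₀) x = f ((f ^ (n₀ - 1)) x) := by
    have h5 := zpow_apply_add f 1 (n₀ - 1) x
    rw [zpow_one] at h5
    have h4 : (1 : ℤ) + (n₀ - 1) = n₀ := by ring
    rw [h4] at h5
    exact h5
  rw [hkey]
  exact hf hprev

lemma index_unique (hf : StrictMono f) (hfa : f a = a) (hfb : f b = b)
    (hcontract : ∀ x ∈ Set.Ioo a b, f x < x)
    {x : ℝ} (hx : x ∈ Ioo a b) {m n : ℤ}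
    (hm : (f ^ m) x ∈ Ioc (f c) c) (hn : (f ^ n) x ∈ Ioc (f c) c) : m = n := by
  have hanti := orbit_antitone hf hfa hfb hcontract hx
  by_contra hne
  rcases lt_or_gt_of_ne hne with hlt | hlt
  · -- m < n: (f^n) x ≤ (f^(m+1)) x = f ((f^m) x) ≤ f c
    have h1 : (f ^ n) x ≤ (f ^ (m + 1)) x := hanti (by omega)
    have h2 : (f ^ (m + 1)) x = f ((f ^ m) x) := by
      rw [add_comm, zpow_apply_add, zpow_one]
    have h3 : f ((f ^ m) x) ≤ f c := (hf.le_iff_le).mpr hm.2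
    exact absurd (h1.trans (h2 ▸ h3)) (not_le.mpr hn.1)
  · have h1 : (f ^ m) x ≤ (f ^ (n + 1)) x := hanti (by omega)
    have h2 : (f ^ (n + 1)) x = f ((f ^ n) x) := by
      rw [add_comm, zpow_apply_add, zpow_one]
    have h3 : f ((f ^ n) x) ≤ f c := (hf.le_iff_le).mpr hn.2
    exact absurd (h1.trans (h2 ▸ h3)) (not_le.mpr hm.1)

end

end Stmt16Aux

/-- Let `f` be an (orientation-preserving) homeomorphism of the line fixing `a < b` with
`f x < x` on `(a,b)`, and let `c ∈ (a,b)`. Then the intervals `fⁿ([f c, c])`, `n ∈ ℤ`,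
cover `(a,b)` and have pairwise disjoint interiors; consequently every self-homeomorphism
`h` of the fundamental domain `[f c, c]` fixing its endpoints extends uniquely to a
homeomorphism `H` of `[a,b]` fixing `a` and `b` and commuting with `f`. -/
theorem stmt16 (a b c : ℝ) (hab : a < b) (hc : c ∈ Set.Ioo a b)
    (f : Equiv.Perm ℝ) (hf_cont : Continuous f) (hf_cont' : Continuous f.symm)
    (hf_mono : StrictMono f) (hfa : f a = a) (hfb : f b = b)
    (hcontract : ∀ x ∈ Set.Ioo a b, f x < x) :
    (Set.Ioo a b ⊆ ⋃ n : ℤ, (f ^ n) '' Set.Icc (f c) c) ∧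
    (∀ m n : ℤ, m ≠ n →
      Disjoint (interior ((f ^ m) '' Set.Icc (f c) c))
        (interior ((f ^ n) '' Set.Icc (f c) c))) ∧
    ∀ h : ℝ → ℝ, ContinuousOn h (Set.Icc (f c) c) → StrictMonoOn h (Set.Icc (f c) c) →
      h (f c) = f c → h c = c → h '' Set.Icc (f c) c = Set.Icc (f c) c →
      ∃ H : ℝ → ℝ,
        (ContinuousOn H (Set.Icc a b) ∧ StrictMonoOn H (Set.Icc a b) ∧
          H a = a ∧ H b = b ∧ H '' Set.Icc a b = Set.Icc a b ∧
          (∀ x ∈ Set.Icc (f c) c, H x = h x) ∧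
          ∀ x ∈ Set.Icc a b, H (f x) = f (H x)) ∧
        ∀ H' : ℝ → ℝ,
          (ContinuousOn H' (Set.Icc a b) ∧ StrictMonoOn H' (Set.Icc a b) ∧
            H' a = a ∧ H' b = b ∧ H' '' Set.Icc a b = Set.Icc a b ∧
            (∀ x ∈ Set.Icc (f c) c, H' x = h x) ∧
            ∀ x ∈ Set.Icc a b, H' (f x) = f (H' x)) →
          Set.EqOn H H' (Set.Icc a b) := by
  classical
  have hfcc : f c < c := hcontract c hc
  have hfc_mem : f c ∈ Set.Ioo a b := ⟨by rw [← hfa]; exact hf_mono hc.1, hfcc.trans hc.2⟩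
  have hIocSub : Set.Ioc (f c) c ⊆ Set.Ioo a b := fun y hy =>
    ⟨hfc_mem.1.trans hy.1, lt_of_le_of_lt hy.2 hc.2⟩
  have hIccSub : Set.Icc (f c) c ⊆ Set.Ioo a b := fun y hy =>
    ⟨lt_of_lt_of_le hfc_mem.1 hy.1, lt_of_le_of_lt hy.2 hc.2⟩
  have cover : ∀ x ∈ Set.Ioo a b, ∃ n : ℤ, (f ^ n) x ∈ Set.Ioc (f c) c := fun x hx =>
    Stmt16Aux.exists_mem_Ioc hf_cont hf_cont' hf_mono hfa hfb hcontract hc hx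
  have uniqI : ∀ x ∈ Set.Ioo a b, ∀ m n : ℤ,
      (f ^ m) x ∈ Set.Ioc (f c) c → (f ^ n) x ∈ Set.Ioc (f c) c → m = n := fun x hx m n hm hn =>
    Stmt16Aux.index_unique hf_mono hfa hfb hcontract hx hm hn
  refine ⟨?_, ?_, ?_⟩
  · -- covering
    intro x hx
    obtain ⟨n, hn⟩ := cover x hx
    exact Set.mem_iUnion.mpr ⟨-n, ⟨(f ^ n) x, ⟨hn.1.le, hn.2⟩, Stmt16Aux.zpow_neg_apply f n x⟩⟩
  · -- disjoint interiors
    have himg : ∀ n : ℤ, (f ^ n) '' Set.Icc (f c) c = Set.Icc ((f ^ n) (f c)) ((f ^ n) c) := by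
      intro n
      apply Set.Subset.antisymm
      · rintro _ ⟨y, hy, rfl⟩
        exact ⟨(Stmt16Aux.zpow_strictMono hf_mono n).le_iff_le.mpr hy.1,
          (Stmt16Aux.zpow_strictMono hf_mono n).le_iff_le.mpr hy.2⟩
      · intro y hy
        refine ⟨(f ^ (-n)) y, ⟨?_, ?_⟩, Stmt16Aux.apply_zpow_neg f n y⟩
        · have h5 := (Stmt16Aux.zpow_strictMono hf_mono n).le_iff_le
            (a := f c) (b := (f ^ (-n)) y)
          rw [Stmt16Aux.apply_zpow_neg] at h5
          exact h5.mp hy.1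
        · have h5 := (Stmt16Aux.zpow_strictMono hf_mono n).le_iff_le
            (a := (f ^ (-n)) y) (b := c)
          rw [Stmt16Aux.apply_zpow_neg] at h5
          exact h5.mp hy.2
    have hantiC := Stmt16Aux.orbit_antitone hf_mono hfa hfb hcontract hc
    have key : ∀ m n : ℤ, m < n →
        Disjoint (interior ((f ^ m) '' Set.Icc (f c) c))
          (interior ((f ^ n) '' Set.Icc (f c) c)) := by
      intro m n hmn
      rw [himg m, himg n, interior_Icc, interior_Icc]
      apply Set.disjoint_left.mpr
      intro z hzm hzn
      have h1 : (f ^ n) c ≤ (f ^ (m + 1)) c := hantiC (by omega)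
      have h2 : (f ^ (m + 1)) c = (f ^ m) (f c) := by
        rw [Stmt16Aux.zpow_apply_add f m 1, zpow_one]
      exact lt_asymm hzm.1 (hzn.2.trans_le (h2 ▸ h1))
    intro m n hmn
    rcases lt_or_gt_of_ne hmn with hlt | hlt
    · exact key m n hlt
    · exact (key n m hlt).symm
  · -- extension
    intro h hcontOn hmono hhfc hhc himgh
    have cover2 := cover
    choose! N hN using cover
    set H : ℝ → ℝ :=
      fun x => if x ∈ Set.Ioo a b then (f ^ (-(N x))) (h ((f ^ (N x)) x)) else x with hHdef
    have Hval : ∀ x ∈ Set.Ioo a b, ∀ n : ℤ, (f ^ n) x ∈ Set.Ioc (f c) c →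
        H x = (f ^ (-n)) (h ((f ^ n) x)) := by
      intro x hx n hn
      have heq : N x = n := uniqI x hx (N x) n (hN x hx) hn
      simp only [hHdef]
      rw [if_pos hx, heq]
    have Hout : ∀ x, x ∉ Set.Ioo a b → H x = x := by
      intro x hx
      simp only [hHdef]
      rw [if_neg hx]
    have hIoch : ∀ y ∈ Set.Ioc (f c) c, h y ∈ Set.Ioc (f c) c := by
      intro y hy
      constructor
      · rw [← hhfc]
        exact hmono ⟨le_refl _, hfcc.le⟩ ⟨hy.1.le, hy.2⟩ hy.1
      · rcases eq_or_lt_of_le hy.2 with heq | hlt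
        · rw [heq, hhc]
        · rw [← hhc]
          exact (hmono ⟨hy.1.le, hy.2⟩ ⟨hfcc.le, le_refl _⟩ hlt).le
    have HmemIoo : ∀ x ∈ Set.Ioo a b, H x ∈ Set.Ioo a b := by
      intro x hx
      rw [Hval x hx (N x) (hN x hx)]
      exact Stmt16Aux.maps_Ioo hf_mono hfa hfb _ (hIocSub (hIoch _ (hN x hx)))
    have Hcanon : ∀ x ∈ Set.Ioo a b, ∀ n : ℤ, (f ^ n) x ∈ Set.Ioc (f c) c →
        (f ^ n) (H x) = h ((f ^ n) x) := by
      intro x hx n hn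
      rw [Hval x hx n hn, Stmt16Aux.apply_zpow_neg]
    have Hleast : ∀ x ∈ Set.Ioo a b, ∀ n : ℤ, (f ^ n) x ∈ Set.Ioc (f c) c →
        ∀ m : ℤ, (f ^ m) x ≤ c → n ≤ m := by
      intro x hx n hn m hm
      by_contra hlt
      push_neg at hlt
      have h1 : (f ^ n) x ≤ (f ^ (m + 1)) x :=
        Stmt16Aux.orbit_antitone hf_mono hfa hfb hcontract hx (by omega)
      have h2 : (f ^ (m + 1)) x = f ((f ^ m) x) := by
        rw [add_comm, Stmt16Aux.zpow_apply_add, zpow_one]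
      have h3 : f ((f ^ m) x) ≤ f c := hf_mono.le_iff_le.mpr hm
      exact absurd (h1.trans (h2 ▸ h3)) (not_le.mpr hn.1)
    have Hmono : StrictMono H := by
      intro x y hxy
      by_cases hx : x ∈ Set.Ioo a b
      · by_cases hy : y ∈ Set.Ioo a b
        · have hnx := hN x hx
          have hny := hN y hy
          have hnm : N x ≤ N y := by
            apply Hleast x hx (N x) hnx (N y)
            exact le_of_lt (lt_of_lt_of_le
              (Stmt16Aux.zpow_strictMono hf_mono (N y) hxy) hny.2)
          rcases eq_or_lt_of_le hnm with heq | hlt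
          · rw [Hval x hx (N x) hnx, Hval y hy (N y) hny, ← heq]
            apply Stmt16Aux.zpow_strictMono hf_mono (-(N x))
            have hny' : (f ^ (N x)) y ∈ Set.Ioc (f c) c := heq ▸ hny
            exact hmono ⟨hnx.1.le, hnx.2⟩ ⟨hny'.1.le, hny'.2⟩
              (Stmt16Aux.zpow_strictMono hf_mono (N x) hxy)
          · have hHx := HmemIoo x hx
            have hHy := HmemIoo y hy
            rw [← (Stmt16Aux.zpow_strictMono hf_mono (N y)).lt_iff_lt]
            have e1 : (f ^ N y) (H y) = h ((f ^ N y) y) := Hcanon y hy _ hny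
            have e2 : (f ^ N x) (H x) = h ((f ^ N x) x) := Hcanon x hx _ hnx
            have e3 : (f ^ N x) (H x) ≤ c := by rw [e2]; exact (hIoch _ hnx).2
            have e4 : (f ^ N y) (H x) ≤ (f ^ (N x + 1)) (H x) :=
              Stmt16Aux.orbit_antitone hf_mono hfa hfb hcontract hHx (by omega)
            have e5 : (f ^ (N x + 1)) (H x) = f ((f ^ N x) (H x)) := by
              rw [add_comm, Stmt16Aux.zpow_apply_add, zpow_one]
            have e6 : f ((f ^ N x) (H x)) ≤ f c := hf_mono.le_iff_le.mpr e3
            have e7 : f c < (f ^ N y) (H y) := by rw [e1]; exact (hIoch _ hny).1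
            exact lt_of_le_of_lt (e4.trans (e5 ▸ e6)) e7
        · have hyb : b ≤ y := by
            by_contra hcon
            push_neg at hcon
            exact hy ⟨hx.1.trans hxy, hcon⟩
          rw [Hout y hy]
          exact lt_of_lt_of_le (HmemIoo x hx).2 hyb
      · by_cases hy : y ∈ Set.Ioo a b
        · have hxa : x ≤ a := by
            by_contra hcon
            push_neg at hcon
            exact hx ⟨hcon, hxy.trans hy.2⟩
          rw [Hout x hx]
          exact lt_of_le_of_lt hxa (HmemIoo y hy).1
        · rw [Hout x hx, Hout y hy]
          exact hxy
    have Hsurj : Function.Surjective H := by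
      intro y
      by_cases hy : y ∈ Set.Ioo a b
      · obtain ⟨n, hn⟩ := cover2 y hy
        have hmem1 : (f ^ n) y ∈ Set.Icc (f c) c := ⟨hn.1.le, hn.2⟩
        have hmem2 : (f ^ n) y ∈ h '' Set.Icc (f c) c := by rw [himgh]; exact hmem1
        obtain ⟨u, hu, huy⟩ := hmem2
        have hufc : u ≠ f c := by
          intro heq
          rw [heq, hhfc] at huy
          exact absurd huy (ne_of_lt hn.1)
        have huIoc : u ∈ Set.Ioc (f c) c := ⟨lt_of_le_of_ne hu.1 (Ne.symm hufc), hu.2⟩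
        refine ⟨(f ^ (-n)) u, ?_⟩
        have hxmem : (f ^ (-n)) u ∈ Set.Ioo a b :=
          Stmt16Aux.maps_Ioo hf_mono hfa hfb _ (hIocSub huIoc)
        have hidx : (f ^ n) ((f ^ (-n)) u) ∈ Set.Ioc (f c) c := by
          rw [Stmt16Aux.apply_zpow_neg]; exact huIoc
        rw [Hval _ hxmem n hidx, Stmt16Aux.apply_zpow_neg, huy, Stmt16Aux.zpow_neg_apply]
      · exact ⟨y, Hout y hy⟩
    have Hcont : Continuous H := Monotone.continuous_of_surjective Hmono.monotone Hsurj
    have Ha : H a = a := Hout a (by simp)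
    have Hb : H b = b := Hout b (by simp)
    have Heqh : ∀ x ∈ Set.Icc (f c) c, H x = h x := by
      intro x hx
      rcases eq_or_lt_of_le hx.1 with heq | hlt
      · rw [← heq]
        have e1 : (f ^ (-1 : ℤ)) (f c) = c := by
          rw [zpow_neg_one]
          exact f.symm_apply_apply c
        rw [Hval _ hfc_mem (-1) (by rw [e1]; exact ⟨hfcc, le_refl c⟩), e1, hhc, hhfc]
        simp
      · have hxIoc : x ∈ Set.Ioc (f c) c := ⟨hlt, hx.2⟩
        have hidx : (f ^ (0 : ℤ)) x ∈ Set.Ioc (f c) c := by simpa using hxIoc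
        rw [Hval _ (hIocSub hxIoc) 0 hidx]
        simp
    have Hcomm : ∀ x ∈ Set.Icc a b, H (f x) = f (H x) := by
      intro x hx
      rcases eq_or_lt_of_le hx.1 with heq | hlt1
      · rw [← heq, hfa, Ha, hfa]
      rcases eq_or_lt_of_le hx.2 with heq | hlt2
      · rw [heq, hfb, Hb, hfb]
      have hxI : x ∈ Set.Ioo a b := ⟨hlt1, hlt2⟩
      have hfxI : f x ∈ Set.Ioo a b := by
        have := Stmt16Aux.maps_Ioo hf_mono hfa hfb 1 hxI
        rwa [zpow_one] at this
      have hnx := hN x hxI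
      have hidx : (f ^ (N x - 1)) (f x) = (f ^ (N x)) x := by
        have h5 := Stmt16Aux.zpow_apply_add f (N x - 1) 1 x
        rw [zpow_one] at h5
        have h4 : N x - 1 + 1 = N x := by ring
        rw [h4] at h5
        exact h5.symm
      rw [Hval _ hfxI (N x - 1) (by rw [hidx]; exact hnx), hidx, Hval _ hxI (N x) hnx]
      have h6 := Stmt16Aux.zpow_apply_add f 1 (-(N x)) (h ((f ^ (N x)) x))
      rw [zpow_one] at h6
      have h7 : -(N x - 1) = 1 + -(N x) := by ring
      rw [h7, h6]
    have HimgIcc : H '' Set.Icc a b = Set.Icc a b := by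
      apply Set.Subset.antisymm
      · rintro _ ⟨x, hx, rfl⟩
        rcases eq_or_lt_of_le hx.1 with heq | h1
        · rw [← heq, Ha]; exact ⟨le_refl a, hab.le⟩
        rcases eq_or_lt_of_le hx.2 with heq | h2
        · rw [heq, Hb]; exact ⟨hab.le, le_refl b⟩
        have := HmemIoo x ⟨h1, h2⟩
        exact ⟨this.1.le, this.2.le⟩
      · intro y hy
        obtain ⟨x, hxy⟩ := Hsurj y
        refine ⟨x, ?_, hxy⟩
        by_contra hxmem
        have hxnotIoo : x ∉ Set.Ioo a b := fun hmm => hxmem ⟨hmm.1.le, hmm.2.le⟩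
        rw [Hout x hxnotIoo] at hxy
        exact hxmem (hxy ▸ hy)
    refine ⟨H, ⟨Hcont.continuousOn, Hmono.strictMonoOn _, Ha, Hb, HimgIcc, Heqh, Hcomm⟩, ?_⟩
    rintro H' ⟨_, _, hH'a, hH'b, _, hH'eq, hH'comm⟩
    have commpow : ∀ n : ℤ, ∀ x ∈ Set.Icc a b, H' ((f ^ n) x) = (f ^ n) (H' x) := by
      intro n
      induction n using Int.induction_on with
      | zero => intro x _; simp
      | succ n ih =>
        intro x hx
        have e1 : (f ^ ((n : ℤ) + 1)) x = f ((f ^ (n : ℤ)) x) := by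
          rw [add_comm, Stmt16Aux.zpow_apply_add, zpow_one]
        have e2 : (f ^ ((n : ℤ) + 1)) (H' x) = f ((f ^ (n : ℤ)) (H' x)) := by
          rw [add_comm, Stmt16Aux.zpow_apply_add, zpow_one]
        rw [e1, hH'comm _ (Stmt16Aux.maps_Icc hf_mono hfa hfb _ hx), ih x hx, e2]
      | pred n ih =>
        intro x hx
        have hy : (f ^ (-(n : ℤ) - 1)) x ∈ Set.Icc a b :=
          Stmt16Aux.maps_Icc hf_mono hfa hfb _ hx
        have e1 : f ((f ^ (-(n : ℤ) - 1)) x) = (f ^ (-(n : ℤ))) x := by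
          have h5 := Stmt16Aux.zpow_apply_add f 1 (-(n : ℤ) - 1) x
          rw [zpow_one] at h5
          have h4 : (1 : ℤ) + (-(n : ℤ) - 1) = -(n : ℤ) := by ring
          rw [h4] at h5
          exact h5.symm
        have e3 : (f ^ (-(n : ℤ))) (H' x) = f ((f ^ (-(n : ℤ) - 1)) (H' x)) := by
          have h5 := Stmt16Aux.zpow_apply_add f 1 (-(n : ℤ) - 1) (H' x)
          rw [zpow_one] at h5
          have h4 : (1 : ℤ) + (-(n : ℤ) - 1) = -(n : ℤ) := by ring
          rw [h4] at h5
          exact h5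
        have e2 := hH'comm _ hy
        rw [e1, ih x hx] at e2
        exact f.injective (e2.symm.trans e3)
    intro x hx
    rcases eq_or_lt_of_le hx.1 with heq | h1
    · rw [← heq, Ha, hH'a]
    rcases eq_or_lt_of_le hx.2 with heq | h2
    · rw [heq, Hb, hH'b]
    have hxI : x ∈ Set.Ioo a b := ⟨h1, h2⟩
    obtain ⟨n, hn⟩ := cover2 x hxI
    have e1 := commpow n x hx
    rw [hH'eq _ ⟨hn.1.le, hn.2⟩] at e1
    have e2 : H' x = (f ^ (-n)) (h ((f ^ n) x)) := by
      rw [e1, Stmt16Aux.zpow_neg_apply]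
    rw [Hval x hxI n hn, e2]
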